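/- For every positive integer n, s(2^n) > (1/2) log₂ n / log₂ 4, equivalently 4^{s(2^n)} > n. -/

import Mathlib

lemma key14 : ∀ a : ℕ, 0 < a → ¬ (5 ∣ a) → 2 ^ (Nat.log 10 a) ∣ a →
    10 * (Nat.log 10 a + 1) ≤ 3 * 4 ^ ((Nat.digits 10 a).sum) := by
  intro a
  induction a using Nat.strong_induction_on with
  | _ a ih =>
    intro ha h5 hdvd
    set i := Nat.log 10 a with hi
    rcases Nat.eq_zero_or_pos i with hz | hpos
    · -- base case: a < 10
      have halt : a < 10 := by
        have := Nat.lt_pow_succ_log_self (by norm_num : 1 < 10) a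
        rw [← hi, hz] at this; simpa using this
      rw [hz, Nat.digits_of_lt 10 a ha.ne' halt]
      have h1 : (1:ℕ) ≤ a := ha
      calc 10 * (0 + 1) = 10 := by ring
        _ ≤ 3 * 4 ^ 1 := by norm_num
        _ ≤ 3 * 4 ^ ([a].sum) := by
            apply Nat.mul_le_mul_left
            exact Nat.pow_le_pow_right (by norm_num) (by simpa using h1)
    · -- inductive step
      set r := a % 10 ^ i with hr
      set q := a / 10 ^ i with hq
      have hpow : 0 < (10:ℕ) ^ i := Nat.pow_pos (by norm_num)
      have hq1 : 1 ≤ q := by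
        apply (Nat.one_le_div_iff hpow).mpr
        exact Nat.pow_log_le_self 10 ha.ne'
      have hrq : a = r + 10 ^ i * q := (Nat.mod_add_div a (10 ^ i)).symm
      have h5r : ¬ (5 ∣ r) := by
        intro h
        apply h5
        have h510 : (5:ℕ) ∣ 10 ^ i := dvd_pow (by norm_num) hpos.ne'
        rw [hrq]
        exact Nat.dvd_add h (h510.mul_right q)
      have hr0 : 0 < r := by
        rcases Nat.eq_zero_or_pos r with h | h
        · exact absurd (h ▸ dvd_zero 5) h5r
        · exact h
      have h2r : 2 ^ i ∣ r := by
        have h210 : (2:ℕ) ^ i ∣ 10 ^ i := pow_dvd_pow_of_dvd (by norm_num) i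
        exact (Nat.dvd_mod_iff h210).mpr hdvd
      have h2le : 2 ^ i ≤ r := Nat.le_of_dvd hr0 h2r
      have hrlt : r < 10 ^ i := Nat.mod_lt _ hpow
      have hrlta : r < a := lt_of_lt_of_le hrlt (Nat.pow_log_le_self 10 ha.ne')
      set j := Nat.log 10 r with hj
      have hji : j < i := Nat.log_lt_of_lt_pow hr0.ne' hrlt
      have h2jr : 2 ^ j ∣ r := dvd_trans (pow_dvd_pow 2 hji.le) h2r
      have IH := ih r hrlta hr0 h5r h2jr
      rw [← hj] at IH
      have hkey : 3 * i < 10 * (j + 1) := by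
        have h1 : (2:ℕ) ^ i < 10 ^ (j + 1) :=
          lt_of_le_of_lt h2le (Nat.lt_pow_succ_log_self (by norm_num) r)
        have h2 : (2:ℕ) ^ (3 * i) < 2 ^ (10 * (j + 1)) := by
          calc (2:ℕ) ^ (3 * i) = (2 ^ i) ^ 3 := by rw [← pow_mul, Nat.mul_comm]
            _ < (10 ^ (j+1)) ^ 3 := Nat.pow_lt_pow_left h1 (by norm_num)
            _ = 1000 ^ (j+1) := by rw [← pow_mul, pow_mul']; norm_num
            _ ≤ 1024 ^ (j+1) := Nat.pow_le_pow_left (by norm_num) _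
            _ = 2 ^ (10 * (j+1)) := by rw [pow_mul]; norm_num
        exact (Nat.pow_lt_pow_iff_right (by norm_num : 1 < 2)).mp h2
      -- q is a single digit
      have hq10 : q < 10 := by
        have halt : a < 10 ^ (i + 1) := Nat.lt_pow_succ_log_self (by norm_num) a
        rw [hq]
        apply Nat.div_lt_of_lt_mul
        rw [← pow_succ]
        exact halt
      -- digit sum splits
      have hsum : (Nat.digits 10 a).sum = (Nat.digits 10 r).sum + q := by
        have hlen : (Nat.digits 10 r).length ≤ i := by
          by_contra h
          push_neg at h
          have h1 := Nat.base_pow_length_digits_le 10 r (by norm_num) hr0.ne'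
          have h10 : (10:ℕ) ^ (i+1) ≤ 10 ^ (Nat.digits 10 r).length :=
            Nat.pow_le_pow_right (by norm_num) h
          have h2 : (10:ℕ)^(i+1) ≤ 10 * r := le_trans h10 h1
          rw [pow_succ, mul_comm] at h2
          have := Nat.le_of_mul_le_mul_left h2 (by norm_num)
          omega
        have hsplit := Nat.digits_append_zeroes_append_digits
          (b := 10) (k := i - (Nat.digits 10 r).length) (m := q) (n := r) (by norm_num) hq1
        rw [show (Nat.digits 10 r).length + (i - (Nat.digits 10 r).length) = i from by omega]
          at hsplit
        rw [hrq, ← hsplit, Nat.digits_of_lt 10 q (by omega) hq10]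
        simp [List.sum_append]
      have hSr : 1 ≤ (Nat.digits 10 r).sum := by
        by_contra h
        push_neg at h
        have : (Nat.digits 10 r).sum = 0 := by omega
        rw [this] at IH
        simp at IH
        omega
      -- final arithmetic
      set A := 4 ^ ((Nat.digits 10 r).sum) with hA
      have hA4 : 4 ≤ A := by
        calc (4:ℕ) = 4 ^ 1 := by norm_num
          _ ≤ A := Nat.pow_le_pow_right (by norm_num) hSr
      have hB : 4 * A ≤ 4 ^ ((Nat.digits 10 a).sum) := by
        rw [hsum]
        calc 4 * A = 4 ^ ((Nat.digits 10 r).sum + 1) := by rw [hA, pow_succ]; ring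
          _ ≤ 4 ^ ((Nat.digits 10 r).sum + q) := Nat.pow_le_pow_right (by norm_num) (by omega)
      omega

theorem stmt14 (n : ℕ) (hn : 0 < n) : n < 4 ^ ((Nat.digits 10 (2 ^ n)).sum) := by
  set i := Nat.log 10 (2 ^ n) with hi
  have hpos : 0 < 2 ^ n := Nat.pow_pos (by norm_num)
  have h5 : ¬ (5 ∣ 2 ^ n) := by
    intro h
    have := Nat.Prime.dvd_of_dvd_pow (by norm_num : Nat.Prime 5) h
    omega
  have hin : i ≤ n := by
    have h1 : (10:ℕ) ^ i ≤ 2 ^ n := Nat.pow_log_le_self 10 hpos.ne'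
    have h2 : (2:ℕ) ^ i ≤ 10 ^ i := Nat.pow_le_pow_left (by norm_num) i
    exact (Nat.pow_le_pow_iff_right (by norm_num : 1 < 2)).mp (le_trans h2 h1)
  have hdvd : 2 ^ i ∣ 2 ^ n := pow_dvd_pow 2 hin
  have hk := key14 (2 ^ n) hpos h5 hdvd
  rw [← hi] at hk
  have hlt : 2 ^ n < 10 ^ (i + 1) := Nat.lt_pow_succ_log_self (by norm_num) (2 ^ n)
  have h3n : 3 * n < 10 * (i + 1) := by
    have h2 : (2:ℕ) ^ (3 * n) < 2 ^ (10 * (i + 1)) := by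
      calc (2:ℕ) ^ (3 * n) = (2 ^ n) ^ 3 := by rw [← pow_mul, Nat.mul_comm]
        _ < (10 ^ (i+1)) ^ 3 := Nat.pow_lt_pow_left hlt (by norm_num)
        _ = 1000 ^ (i+1) := by rw [← pow_mul, pow_mul']; norm_num
        _ ≤ 1024 ^ (i+1) := Nat.pow_le_pow_left (by norm_num) _
        _ = 2 ^ (10 * (i+1)) := by rw [pow_mul]; norm_num
    exact (Nat.pow_lt_pow_iff_right (by norm_num : 1 < 2)).mp h2
  omega
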